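/- With f̃(x) = 32Λx(Λ+x²)(Λx²+1)/(Λ²+(Λ²+1)x⁴+4Λx²+1)² and j̃(x) = (Λ²−1)²x²/(4Λ(Λ+x²)(Λx²+1)), the integral ∫₀^∞ f̃(x)·j̃(x) dx equals 2(1 − Gd(log Λ)/sinh(log Λ)), where Gd(y) = 2 arctan(e^y) − π/2, for every Λ > 1. -/

import Mathlib

open MeasureTheory

/-- `f̃(x) = 32Λx(Λ+x²)(Λx²+1)/(Λ² + (Λ²+1)x⁴ + 4Λx² + 1)²`. -/
noncomputable def ftil (Λ x : ℝ) : ℝ :=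
  32 * Λ * x * (Λ + x ^ 2) * (Λ * x ^ 2 + 1)
    / (Λ ^ 2 + (Λ ^ 2 + 1) * x ^ 4 + 4 * Λ * x ^ 2 + 1) ^ 2

/-- `j̃(x) = (Λ²−1)²x²/(4Λ(Λ+x²)(Λx²+1))`. -/
noncomputable def jtil (Λ x : ℝ) : ℝ :=
  (Λ ^ 2 - 1) ^ 2 * x ^ 2 / (4 * Λ * (Λ + x ^ 2) * (Λ * x ^ 2 + 1))

/-- The Gudermannian function `Gd(y) = 2 arctan(e^y) − π/2`. -/
noncomputable def Gd (y : ℝ) : ℝ := 2 * Real.arctan (Real.exp y) - Real.pi / 2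

open Real Filter Topology in
/-- The `m → ∞` Mazur lower bound: for every `Λ > 1`,
`∫₀^∞ f̃(x)·j̃(x) dx = 2(1 − Gd(log Λ)/sinh(log Λ))`. -/
theorem mazur_integral (Λ : ℝ) (hΛ : 1 < Λ) :
    ∫ x in Set.Ioi (0 : ℝ), ftil Λ x * jtil Λ x
      = 2 * (1 - Gd (Real.log Λ) / Real.sinh (Real.log Λ)) := by
  have hΛ0 : 0 < Λ := by linarith
  have hΛ1 : (0:ℝ) < Λ ^ 2 - 1 := by nlinarith
  set c : ℝ := 4 * Λ / (Λ ^ 2 - 1) with hc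
  set F : ℝ → ℝ := fun x =>
    -((2 * (Λ ^ 2 + 1) + 4 * Λ * x ^ 2)
        / (Λ ^ 2 + (Λ ^ 2 + 1) * x ^ 4 + 4 * Λ * x ^ 2 + 1))
      - c * Real.arctan (((Λ ^ 2 + 1) * x ^ 2 + 2 * Λ) / (Λ ^ 2 - 1)) with hF
  have hQ : ∀ x : ℝ, 0 < Λ ^ 2 + (Λ ^ 2 + 1) * x ^ 4 + 4 * Λ * x ^ 2 + 1 := by
    intro x
    nlinarith [sq_nonneg (x ^ 2), sq_nonneg x, sq_nonneg (x ^ 2 - 1), sq_nonneg Λ]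
  -- derivative of F is the integrand, everywhere
  have hderiv : ∀ x : ℝ, HasDerivAt F (ftil Λ x * jtil Λ x) x := by
    intro x
    have hQx := hQ x
    have hx2 : HasDerivAt (fun x : ℝ => x ^ 2) (2 * x) x := by
      simpa using hasDerivAt_pow 2 x
    have hx4 : HasDerivAt (fun x : ℝ => x ^ 4) (4 * x ^ 3) x := by
      simpa using hasDerivAt_pow 4 x
    have hN : HasDerivAt (fun x : ℝ => 2 * (Λ ^ 2 + 1) + 4 * Λ * x ^ 2)
        (4 * Λ * (2 * x)) x := (hx2.const_mul (4 * Λ)).const_add _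
    have hQ' : HasDerivAt
        (fun x : ℝ => Λ ^ 2 + (Λ ^ 2 + 1) * x ^ 4 + 4 * Λ * x ^ 2 + 1)
        ((Λ ^ 2 + 1) * (4 * x ^ 3) + 4 * Λ * (2 * x)) x := by
      simpa using
        (((hx4.const_mul (Λ ^ 2 + 1)).const_add (Λ ^ 2)).add
          (hx2.const_mul (4 * Λ))).add_const 1
    have hdiv := hN.div hQ' (ne_of_gt hQx)
    have harg : HasDerivAt (fun x : ℝ => ((Λ ^ 2 + 1) * x ^ 2 + 2 * Λ) / (Λ ^ 2 - 1))
        ((Λ ^ 2 + 1) * (2 * x) / (Λ ^ 2 - 1)) x :=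
      ((hx2.const_mul (Λ ^ 2 + 1)).add_const (2 * Λ)).div_const _
    have hat := harg.arctan
    have htot := (hdiv.neg).sub (hat.const_mul c)
    refine htot.congr_deriv ?_
    symm
    have hw : (0:ℝ) < 1 + (((Λ ^ 2 + 1) * x ^ 2 + 2 * Λ) / (Λ ^ 2 - 1)) ^ 2 := by
      positivity
    have hA : (0:ℝ) < Λ + x ^ 2 := by nlinarith [sq_nonneg x]
    have hB : (0:ℝ) < Λ * x ^ 2 + 1 := by nlinarith [sq_nonneg x]
    rw [ftil, jtil, hc]
    field_simp
    ring
  -- nonnegativity of the integrand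
  have hpos : ∀ x ∈ Set.Ioi (0:ℝ), 0 ≤ ftil Λ x * jtil Λ x := by
    intro x hx
    have hx0 : (0:ℝ) < x := hx
    have hA : (0:ℝ) < Λ + x ^ 2 := by nlinarith [sq_nonneg x]
    have hB : (0:ℝ) < Λ * x ^ 2 + 1 := by nlinarith [sq_nonneg x]
    have h1 : 0 ≤ ftil Λ x := by
      apply div_nonneg _ (sq_nonneg _)
      positivity
    have h2 : 0 ≤ jtil Λ x := by
      apply div_nonneg (by positivity)
      positivity
    exact mul_nonneg h1 h2
  -- limit of F at infinity
  have hT2 : Tendsto (fun x : ℝ =>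
      Real.arctan (((Λ ^ 2 + 1) * x ^ 2 + 2 * Λ) / (Λ ^ 2 - 1))) atTop (𝓝 (π / 2)) := by
    have h1 : Tendsto (fun x : ℝ => ((Λ ^ 2 + 1) * x ^ 2 + 2 * Λ) / (Λ ^ 2 - 1))
        atTop atTop := by
      apply Tendsto.atTop_div_const hΛ1
      exact tendsto_atTop_add_const_right _ _
        ((tendsto_pow_atTop two_ne_zero).const_mul_atTop (by positivity))
    exact (Real.tendsto_arctan_atTop.mono_right nhdsWithin_le_nhds).comp h1
  have hT1 : Tendsto (fun x : ℝ =>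
      (2 * (Λ ^ 2 + 1) + 4 * Λ * x ^ 2)
        / (Λ ^ 2 + (Λ ^ 2 + 1) * x ^ 4 + 4 * Λ * x ^ 2 + 1)) atTop (𝓝 0) := by
    have heq : ∀ᶠ x : ℝ in atTop,
        (2 * (Λ ^ 2 + 1) / x ^ 4 + 4 * Λ / x ^ 2)
          / (Λ ^ 2 / x ^ 4 + (Λ ^ 2 + 1) + 4 * Λ / x ^ 2 + 1 / x ^ 4)
        = (2 * (Λ ^ 2 + 1) + 4 * Λ * x ^ 2)
          / (Λ ^ 2 + (Λ ^ 2 + 1) * x ^ 4 + 4 * Λ * x ^ 2 + 1) := by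
      filter_upwards [eventually_ge_atTop (1:ℝ)] with x hx
      have hx0 : x ≠ 0 := by positivity
      have hQx := hQ x
      have hden : (0:ℝ) < Λ ^ 2 / x ^ 4 + (Λ ^ 2 + 1) + 4 * Λ / x ^ 2 + 1 / x ^ 4 := by
        positivity
      field_simp
    have hnum : Tendsto (fun x : ℝ => 2 * (Λ ^ 2 + 1) / x ^ 4 + 4 * Λ / x ^ 2)
        atTop (𝓝 0) := by
      have h1 := tendsto_const_nhds (α := ℝ) (x := 2 * (Λ ^ 2 + 1)) |>.div_atTop
        (tendsto_pow_atTop (n := 4) (by norm_num))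
      have h2 := tendsto_const_nhds (α := ℝ) (x := 4 * Λ) |>.div_atTop
        (tendsto_pow_atTop (n := 2) (by norm_num))
      simpa using h1.add h2
    have hden : Tendsto (fun x : ℝ =>
        Λ ^ 2 / x ^ 4 + (Λ ^ 2 + 1) + 4 * Λ / x ^ 2 + 1 / x ^ 4)
        atTop (𝓝 (Λ ^ 2 + 1)) := by
      have h1 := tendsto_const_nhds (α := ℝ) (x := Λ ^ 2) |>.div_atTop
        (tendsto_pow_atTop (n := 4) (by norm_num))
      have h2 := tendsto_const_nhds (α := ℝ) (x := 4 * Λ) |>.div_atTop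
        (tendsto_pow_atTop (n := 2) (by norm_num))
      have h3 := tendsto_const_nhds (α := ℝ) (x := (1:ℝ)) |>.div_atTop
        (tendsto_pow_atTop (n := 4) (by norm_num))
      have := ((h1.add_const (Λ ^ 2 + 1)).add h2).add h3
      simpa using this
    have := (hnum.div hden (by positivity))
    simp only [zero_div] at this
    exact this.congr' heq
  have hFlim : Tendsto F atTop (𝓝 (-0 - c * (π / 2))) := (hT1.neg).sub (hT2.const_mul c)
  -- apply the FTC lemma
  have key := integral_Ioi_of_hasDerivAt_of_nonneg'
    (g := F) (g' := fun x => ftil Λ x * jtil Λ x) (a := 0)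
    (fun x _ => hderiv x) hpos hFlim
  rw [key]
  -- evaluate `F 0` and finish with the arctan identity
  have harc : Real.arctan (2 * Λ / (Λ ^ 2 - 1)) = π - 2 * Real.arctan Λ := by
    have hlt : Λ⁻¹ * Λ⁻¹ < 1 := by
      rw [← mul_inv]
      apply inv_lt_one_of_one_lt₀
      nlinarith
    have h1 := Real.arctan_add hlt
    have h2 : (Λ⁻¹ + Λ⁻¹) / (1 - Λ⁻¹ * Λ⁻¹) = 2 * Λ / (Λ ^ 2 - 1) := by
      rw [div_eq_div_iff]
      · field_simp
        ring
      · rw [← mul_inv]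
        intro h
        have : Λ * Λ = 1 := by
          have hne : (Λ * Λ)⁻¹ = 1 := by linarith
          field_simp at hne
          linarith
        nlinarith
      · exact ne_of_gt hΛ1
    have h3 : Real.arctan Λ⁻¹ = π / 2 - Real.arctan Λ := Real.arctan_inv_of_pos hΛ0
    rw [← h2, ← h1, h3]; ring
    
  have hGd : Gd (Real.log Λ) = 2 * Real.arctan Λ - π / 2 := by
    rw [Gd, Real.exp_log hΛ0]
  have hsinh : Real.sinh (Real.log Λ) = (Λ ^ 2 - 1) / (2 * Λ) := by
    rw [Real.sinh_log hΛ0]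
    field_simp
  rw [hGd, hsinh, hF]
  simp only [hc]
  norm_num
  rw [harc]
  have h1 : Λ ^ 2 + 1 ≠ 0 := by positivity
  have h2 : Λ ^ 2 - 1 ≠ 0 := ne_of_gt hΛ1
  have h3 : Λ ≠ 0 := ne_of_gt hΛ0
  field_simp
  ring
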